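/- A function f : ℝ^{d×m} → ℝ^{m'} is invariant under left multiplication by orthogonal matrices (f(OZ) = f(Z) for all O ∈ O(d)) if and only if there exists a function g : ℝ^{m×m} → ℝ^{m'} such that f(Z) = g(ZᵀZ) for all Z. -/

import Mathlib

open Matrix

open scoped InnerProductSpace

private lemma toEuclideanLin_mul {a b c : ℕ} (A : Matrix (Fin a) (Fin b) ℝ)
    (B : Matrix (Fin b) (Fin c) ℝ) :
    Matrix.toEuclideanLin (A * B) =
      (Matrix.toEuclideanLin A).comp (Matrix.toEuclideanLin B) := by
  rw [Matrix.toEuclideanLin_eq_toLin, Matrix.toEuclideanLin_eq_toLin,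
    Matrix.toEuclideanLin_eq_toLin]
  exact Matrix.toLin_mul _ _ _ A B

private lemma toEuclideanLin_transpose {a b : ℕ} (A : Matrix (Fin a) (Fin b) ℝ) :
    Matrix.toEuclideanLin Aᵀ = LinearMap.adjoint (Matrix.toEuclideanLin A) := by
  rw [← Matrix.toEuclideanLin_conjTranspose_eq_adjoint]
  have hAt : Aᴴ = Aᵀ := by
    ext i j
    simp [Matrix.conjTranspose_apply]
  rw [hAt]

private lemma exists_orthogonal_of_gram_eq {d m : ℕ} (Z W : Matrix (Fin d) (Fin m) ℝ)
    (h : Zᵀ * Z = Wᵀ * W) :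
    ∃ O : Matrix (Fin d) (Fin d) ℝ, Oᵀ * O = 1 ∧ O * Z = W := by
  set T := Matrix.toEuclideanLin Z with hTdef
  set S := Matrix.toEuclideanLin W with hSdef
  have hinner : ∀ x y : EuclideanSpace ℝ (Fin m), ⟪T x, T y⟫_ℝ = ⟪S x, S y⟫_ℝ := by
    intro x y
    have h1 : ⟪T x, T y⟫_ℝ = ⟪x, Matrix.toEuclideanLin (Zᵀ * Z) y⟫_ℝ := by
      rw [toEuclideanLin_mul, toEuclideanLin_transpose, LinearMap.comp_apply,
        LinearMap.adjoint_inner_right]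
    have h2 : ⟪S x, S y⟫_ℝ = ⟪x, Matrix.toEuclideanLin (Wᵀ * W) y⟫_ℝ := by
      rw [toEuclideanLin_mul, toEuclideanLin_transpose, LinearMap.comp_apply,
        LinearMap.adjoint_inner_right]
    rw [h1, h2, h]
  have hker : LinearMap.ker T ≤ LinearMap.ker S := by
    intro x hx
    rw [LinearMap.mem_ker] at hx ⊢
    have := hinner x x
    rw [hx, inner_zero_left] at this
    exact inner_self_eq_zero.mp this.symm
  -- the isometry from the range of T sending T x to S x
  let φ : ↥(LinearMap.range T) →ₗ[ℝ] EuclideanSpace ℝ (Fin d) :=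
    ((LinearMap.ker T).liftQ S hker).comp T.quotKerEquivRange.symm.toLinearMap
  have hφ : ∀ (x : EuclideanSpace ℝ (Fin m)) (hx : T x ∈ LinearMap.range T),
      φ ⟨T x, hx⟩ = S x := by
    intro x hx
    have : T.quotKerEquivRange.symm ⟨T x, hx⟩ = Submodule.Quotient.mk x := by
      apply T.quotKerEquivRange.injective
      rw [LinearEquiv.apply_symm_apply]
      ext
      simp [LinearMap.quotKerEquivRange_apply_mk]
    simp only [φ, LinearMap.comp_apply, LinearEquiv.coe_toLinearMap, this,
      Submodule.liftQ_apply]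
  have hφinner : ∀ u v : ↥(LinearMap.range T), ⟪φ u, φ v⟫_ℝ = ⟪u, v⟫_ℝ := by
    rintro ⟨u, x, hx⟩ ⟨v, y, hy⟩
    subst hx hy
    show ⟪φ ⟨T x, LinearMap.mem_range_self T x⟩, φ ⟨T y, LinearMap.mem_range_self T y⟩⟫_ℝ =
      ⟪(⟨T x, LinearMap.mem_range_self T x⟩ : ↥(LinearMap.range T)),
        ⟨T y, LinearMap.mem_range_self T y⟩⟫_ℝ
    rw [hφ, hφ, Submodule.coe_inner]
    exact (hinner x y).symm
  let L : ↥(LinearMap.range T) →ₗᵢ[ℝ] EuclideanSpace ℝ (Fin d) :=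
    φ.isometryOfInner hφinner
  have hL : ∀ (x : EuclideanSpace ℝ (Fin m)) (hx : T x ∈ LinearMap.range T),
      L ⟨T x, hx⟩ = S x := hφ
  let OL := L.extend
  let O : Matrix (Fin d) (Fin d) ℝ := Matrix.toEuclideanLin.symm OL.toLinearMap
  have hO : Matrix.toEuclideanLin O = OL.toLinearMap :=
    Matrix.toEuclideanLin.apply_symm_apply _
  refine ⟨O, ?_, ?_⟩
  · apply Matrix.toEuclideanLin.injective
    rw [toEuclideanLin_mul, toEuclideanLin_transpose, hO]
    rw [show ((1 : Matrix (Fin d) (Fin d) ℝ)) = (1 : Matrix (Fin d) (Fin d) ℝ) from rfl]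
    have h1 : Matrix.toEuclideanLin (1 : Matrix (Fin d) (Fin d) ℝ) = LinearMap.id := by
      rw [Matrix.toEuclideanLin_eq_toLin]
      exact Matrix.toLin_one _
    rw [h1]
    apply LinearMap.ext
    intro x
    apply ext_inner_left ℝ
    intro v
    rw [LinearMap.comp_apply, LinearMap.adjoint_inner_right, LinearMap.id_apply]
    exact OL.inner_map_map v x
  · apply Matrix.toEuclideanLin.injective
    rw [toEuclideanLin_mul, hO, ← hSdef, ← hTdef]
    apply LinearMap.ext
    intro x
    have hmem : T x ∈ LinearMap.range T := LinearMap.mem_range_self T x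
    have : OL (⟨T x, hmem⟩ : ↥(LinearMap.range T)) = L ⟨T x, hmem⟩ :=
      L.extend_apply _
    calc OL.toLinearMap.comp T x = OL (T x) := rfl
      _ = L ⟨T x, hmem⟩ := this
      _ = S x := hL x hmem

theorem orth_invariant_iff_fn_of_gram {d m m' : ℕ}
    (f : Matrix (Fin d) (Fin m) ℝ → (Fin m' → ℝ)) :
    (∀ (O : Matrix (Fin d) (Fin d) ℝ) (Z : Matrix (Fin d) (Fin m) ℝ),
        Oᵀ * O = 1 → f (O * Z) = f Z) ↔
      ∃ g : Matrix (Fin m) (Fin m) ℝ → (Fin m' → ℝ),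
        ∀ Z : Matrix (Fin d) (Fin m) ℝ, f Z = g (Zᵀ * Z) := by
  constructor
  · intro hf
    classical
    refine ⟨fun G => if h : ∃ Z : Matrix (Fin d) (Fin m) ℝ, Zᵀ * Z = G then f h.choose
      else 0, ?_⟩
    intro Z
    have hex : ∃ W : Matrix (Fin d) (Fin m) ℝ, Wᵀ * W = Zᵀ * Z := ⟨Z, rfl⟩
    simp only [dif_pos hex]
    obtain ⟨O, hO, hOZ⟩ := exists_orthogonal_of_gram_eq hex.choose Z hex.choose_spec
    conv_lhs => rw [← hOZ]
    exact hf O hex.choose hO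
  · rintro ⟨g, hg⟩ O Z hO
    rw [hg, hg Z, Matrix.transpose_mul, Matrix.mul_assoc, ← Matrix.mul_assoc Oᵀ O Z,
      hO, Matrix.one_mul]
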